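/- Let $(Z^k)_{k \in \mathbb{N}}$ be a sequence of nonnegative supermartingales on the time interval $[0,T]$ (with $T$ a finite stopping time) with $Z^k_0 = 1$ for all $k$, and suppose $Z^k_T \to 1$ in probability as $k \to \infty$. Then $\sup_{t \in [0,T]} |Z^k_t - 1| \to 0$ in probability as $k \to \infty$. -/

import Mathlib

open MeasureTheory Filter Set
open scoped Topology ENNReal

noncomputable section

/-- Uniform convergence on compact time intervals, in probability (ucp). -/
def UcpTendsto {Ω ι : Type*} [MeasurableSpace Ω] (μ : Measure Ω) (l : Filter ι)
    (F : ι → ℝ → Ω → ℝ) (G : ℝ → Ω → ℝ) : Prop :=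
  ∀ T : ℝ, TendstoInMeasure μ
    (fun n ω => ⨆ t ∈ Icc (0 : ℝ) T, |F n t ω - G t ω|) l (fun _ => (0 : ℝ))

/-- All paths are right-continuous. -/
def RightCont {Ω : Type*} (X : ℝ → Ω → ℝ) : Prop :=
  ∀ ω t, ContinuousWithinAt (fun s => X s ω) (Ici t) t

/-- `Xm` is the process of left limits of `X`. -/
def HasLeftLimits {Ω : Type*} (X Xm : ℝ → Ω → ℝ) : Prop :=
  ∀ ω t, Tendsto (fun s => X s ω) (𝓝[<] t) (𝓝 (Xm t ω))

/-- Local martingale: there is a localizing sequence of stopping times. -/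
def IsLocalMartingale {Ω : Type*} {m0 : MeasurableSpace Ω} (ℱ : Filtration ℝ m0)
    (μ : Measure Ω) (M : ℝ → Ω → ℝ) : Prop :=
  ∃ τ : ℕ → Ω → ℝ, (∀ n, IsStoppingTime ℱ (fun ω => (τ n ω : WithTop ℝ))) ∧
    (∀ ω, Tendsto (fun n => τ n ω) atTop atTop) ∧
    ∀ n, Martingale (fun t ω => M (min t (τ n ω)) ω) ℱ μ

/-- Semimartingale: adapted càdlàg process that is the sum of a local martingale and an
adapted process of finite variation on compacts. -/
def IsSemimartingale {Ω : Type*} {m0 : MeasurableSpace Ω} (ℱ : Filtration ℝ m0)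
    (μ : Measure Ω) (X : ℝ → Ω → ℝ) : Prop :=
  Adapted ℱ X ∧ RightCont X ∧ (∃ Xm, HasLeftLimits X Xm) ∧
    ∃ M A : ℝ → Ω → ℝ, IsLocalMartingale ℱ μ M ∧
      (∀ ω a b, BoundedVariationOn (fun s => A s ω) (Icc a b)) ∧
      ∀ t ω, X t ω = X 0 ω + M t ω + A t ω

/-- Discrete quadratic-variation sums along the dyadic partition of mesh `2⁻ⁿ` of `[0, n]`,
stopped at time `t`. -/
def qvApprox {Ω : Type*} (X : ℝ → Ω → ℝ) (n : ℕ) (t : ℝ) (ω : Ω) : ℝ :=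
  ∑ j ∈ Finset.range (n * 2 ^ n),
    (X (min (((j : ℝ) + 1) / 2 ^ n) t) ω - X (min ((j : ℝ) / 2 ^ n) t) ω) ^ 2

/-- `Q` is (a version of) the quadratic variation `[X, X]` (without the initial square). -/
def IsQuadVar {Ω : Type*} [MeasurableSpace Ω] (μ : Measure Ω) (X Q : ℝ → Ω → ℝ) : Prop :=
  UcpTendsto μ atTop (fun n => qvApprox X n) Q

/-- Riemann sums of the (right limit of the) integrand `ηp` against `S` along dyadic
partitions, stopped at `t`. -/
def riemannApprox {Ω : Type*} (ηp S : ℝ → Ω → ℝ) (n : ℕ) (t : ℝ) (ω : Ω) : ℝ :=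
  ∑ j ∈ Finset.range (n * 2 ^ n),
    ηp ((j : ℝ) / 2 ^ n) ω *
      (S (min (((j : ℝ) + 1) / 2 ^ n) t) ω - S (min ((j : ℝ) / 2 ^ n) t) ω)

/-- `I` is (a version of) the Itô stochastic integral `∫₀· η dS`, characterized as the ucp
limit of Riemann sums along deterministic dyadic partitions; here `ηp` is the process of
right limits of the càglàd integrand `η`. -/
def IsStochInt {Ω : Type*} [MeasurableSpace Ω] (μ : Measure Ω) (ηp S I : ℝ → Ω → ℝ) : Prop :=
  UcpTendsto μ atTop (fun n => riemannApprox ηp S n) I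

/-- Sum of `g` over the (at most countably many nontrivial) times in `(0, t]`. -/
def jumpSum {Ω : Type*} (g : ℝ → Ω → ℝ) (t : ℝ) (ω : Ω) : ℝ :=
  ∑' s : Ioc (0 : ℝ) t, g (s : ℝ) ω

/-- The Doléans-Dade stochastic exponential of a semimartingale `Y` (with `Y₀ = 0`,
left limits `Ym` and quadratic variation `Q`), expressed through the closed-form formula
`ℰ(Y) = exp(Y - ½[Y,Y]ᶜ - Σ_{s≤·} (ΔY_s - log(1+ΔY_s)))`, valid when `ΔY > -1`. -/
def stochExp {Ω : Type*} (Y Ym Q : ℝ → Ω → ℝ) (t : ℝ) (ω : Ω) : ℝ :=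
  Real.exp (Y t ω
    - (1 / 2) * (Q t ω - jumpSum (fun s ω' => (Y s ω' - Ym s ω') ^ 2) t ω)
    - jumpSum (fun s ω' => (Y s ω' - Ym s ω') - Real.log (1 + (Y s ω' - Ym s ω'))) t ω)

end

namespace Statement0Auxiliary

variable {Ω : Type*} {m0 : MeasurableSpace Ω} {μ : Measure Ω} [IsProbabilityMeasure μ]

variable {Ω : Type*} {m0 : MeasurableSpace Ω} {μ : Measure Ω} [IsProbabilityMeasure μ]

private lemma max_identity (x : ℝ) : (1 - x) + max (x - 1) 0 = max (1 - x) 0 := by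
  rcases le_total x 1 with h | h
  · rw [max_eq_right (by linarith), max_eq_left (by linarith)]; ring
  · rw [max_eq_left (by linarith), max_eq_right (by linarith)]; ring

lemma down_lemma (𝒢 : Filtration ℕ m0) (X : ℕ → Ω → ℝ) (hX : Supermartingale X 𝒢 μ)
    {δ : ℝ} (hδ : 0 < δ) (n : ℕ) :
    δ * (μ {ω | ∃ i ≤ n, X i ω ≤ 1 - δ}).toReal ≤ ∫ ω, max (1 - X n ω) 0 ∂μ := by
  classical
  set C : ℕ → Set Ω := fun j => {ω | (∀ l < j, 1 - δ < X l ω) ∧ X j ω ≤ 1 - δ} with hCdef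
  have hXm : ∀ l j, l ≤ j → Measurable[𝒢 j] (X l) := fun l j h =>
    ((hX.stronglyAdapted l).mono (𝒢.mono h) |>.measurable)
  have hmeas : ∀ j, MeasurableSet[𝒢 j] (C j) := by
    intro j
    have h1 : {ω | ∀ l < j, 1 - δ < X l ω} = ⋂ l ∈ Set.Iio j, {ω | 1 - δ < X l ω} := by
      ext ω; simp
    have : C j = (⋂ l ∈ Set.Iio j, {ω | 1 - δ < X l ω}) ∩ {ω | X j ω ≤ 1 - δ} := by
      rw [hCdef, ← h1]; rfl
    rw [this]
    exact (MeasurableSet.biInter (Set.to_countable _) fun l hl =>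
      measurableSet_lt measurable_const (hXm l j (le_of_lt hl))).inter
      (measurableSet_le (hXm j j le_rfl) measurable_const)
  have hm : ∀ j, MeasurableSet (C j) := fun j => 𝒢.le j _ (hmeas j)
  have hdisjlt : ∀ i j, i < j → Disjoint (C i) (C j) := by
    intro i j hij
    refine Set.disjoint_left.2 fun ω hωi hωj => absurd (hωj.1 i hij) (not_lt.2 hωi.2)
  have hdisj : Pairwise (Function.onFun Disjoint C) := by
    intro i j hij
    rcases hij.lt_or_gt with h | h
    · exact hdisjlt _ _ h
    · exact (hdisjlt _ _ h).symm
  have hA : {ω | ∃ i ≤ n, X i ω ≤ 1 - δ} = ⋃ j ∈ Finset.range (n + 1), C j := by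
    ext ω
    simp only [Set.mem_setOf_eq, Set.mem_iUnion, Finset.mem_range, Nat.lt_succ_iff, hCdef]
    constructor
    · rintro ⟨i, hin, hi⟩
      have hex : ∃ i, X i ω ≤ 1 - δ := ⟨i, hi⟩
      exact ⟨Nat.find hex, le_trans (Nat.find_min' hex hi) hin,
        fun l hl => lt_of_not_ge (Nat.find_min hex hl), Nat.find_spec hex⟩
    · rintro ⟨j, hj, _, h2⟩; exact ⟨j, hj, h2⟩
  rw [hA]
  have hμA : μ (⋃ j ∈ Finset.range (n + 1), C j) = ∑ j ∈ Finset.range (n + 1), μ (C j) :=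
    measure_biUnion_finset (hdisj.set_pairwise _) fun j _ => hm j
  have hintA : ∫ ω in ⋃ j ∈ Finset.range (n + 1), C j, X n ω ∂μ
      = ∑ j ∈ Finset.range (n + 1), ∫ ω in C j, X n ω ∂μ :=
    integral_biUnion_finset _ (fun j _ => hm j) (hdisj.set_pairwise _)
      (fun j _ => (hX.integrable n).integrableOn)
  have hterm : ∀ j ∈ Finset.range (n + 1), ∫ ω in C j, X n ω ∂μ ≤ (1 - δ) * (μ (C j)).toReal := by
    intro j hj
    refine le_trans (hX.setIntegral_le (Nat.lt_succ_iff.mp (Finset.mem_range.mp hj)) (hmeas j)) ?_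
    have hle := setIntegral_mono_on ((hX.integrable j).integrableOn)
      (integrableOn_const) (hm j) (fun ω hω => hω.2)
    rwa [setIntegral_const, smul_eq_mul, mul_comm] at hle
  set A := ⋃ j ∈ Finset.range (n + 1), C j with hAdef
  have hmA : MeasurableSet A := Finset.measurableSet_biUnion _ fun j _ => hm j
  have hXA : ∫ ω in A, X n ω ∂μ ≤ (1 - δ) * (μ A).toReal := by
    rw [hintA, hμA, ENNReal.toReal_sum (fun j _ => measure_ne_top μ _), Finset.mul_sum]
    exact Finset.sum_le_sum hterm
  have h1 : ∫ ω in A, (1 - X n ω) ∂μ = (μ A).toReal - ∫ ω in A, X n ω ∂μ := by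
    rw [integral_sub (integrableOn_const (s := A) (μ := μ) (C := (1:ℝ)) (measure_ne_top μ _))
      ((hX.integrable n).integrableOn)]
    simp [setIntegral_const, measureReal_def]
  have h2 : ∫ ω in A, (1 - X n ω) ∂μ ≤ ∫ ω, max (1 - X n ω) 0 ∂μ := by
    calc ∫ ω in A, (1 - X n ω) ∂μ ≤ ∫ ω in A, max (1 - X n ω) 0 ∂μ :=
        setIntegral_mono_on ((integrable_const (1:ℝ)).sub (hX.integrable n)).integrableOn
          (((integrable_const (1:ℝ)).sub (hX.integrable n)).pos_part).integrableOn hmA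
          (fun ω _ => le_max_left _ _)
      _ ≤ ∫ ω, max (1 - X n ω) 0 ∂μ :=
        setIntegral_le_integral (((integrable_const (1:ℝ)).sub (hX.integrable n)).pos_part)
          (ae_of_all _ fun ω => le_max_right _ _)
  nlinarith [ENNReal.toReal_nonneg (a := μ A)]

lemma up_lemma (𝒢 : Filtration ℕ m0) (X : ℕ → Ω → ℝ) (hX : Supermartingale X 𝒢 μ)
    (h0 : ∫ ω, X 0 ω ∂μ ≤ 1) {δ : ℝ} (hδ : 0 < δ) (n : ℕ) :
    δ * (μ {ω | ∃ i ≤ n, 1 + δ ≤ X i ω}).toReal ≤ ∫ ω, max (1 - X n ω) 0 ∂μ := by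
  classical
  set C : ℕ → Set Ω := fun j => {ω | (∀ l < j, X l ω < 1 + δ) ∧ 1 + δ ≤ X j ω} with hCdef
  set D : ℕ → Set Ω := fun i => {ω | ∀ l ≤ i, X l ω < 1 + δ} with hDdef
  have hXm : ∀ l j, l ≤ j → Measurable[𝒢 j] (X l) := fun l j h =>
    ((hX.stronglyAdapted l).mono (𝒢.mono h) |>.measurable)
  have hmeasC : ∀ j, MeasurableSet[𝒢 j] (C j) := by
    intro j
    have h1 : {ω | ∀ l < j, X l ω < 1 + δ} = ⋂ l ∈ Set.Iio j, {ω | X l ω < 1 + δ} := by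
      ext ω; simp
    have : C j = (⋂ l ∈ Set.Iio j, {ω | X l ω < 1 + δ}) ∩ {ω | 1 + δ ≤ X j ω} := by
      rw [hCdef, ← h1]; rfl
    rw [this]
    exact (MeasurableSet.biInter (Set.to_countable _) fun l hl =>
      measurableSet_lt (hXm l j (le_of_lt hl)) measurable_const).inter
      (measurableSet_le measurable_const (hXm j j le_rfl))
  have hmeasD : ∀ i, MeasurableSet[𝒢 i] (D i) := by
    intro i
    have : D i = ⋂ l ∈ Set.Iic i, {ω | X l ω < 1 + δ} := by ext ω; simp [hDdef]
    rw [this]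
    exact MeasurableSet.biInter (Set.to_countable _) fun l hl =>
      measurableSet_lt (hXm l i hl) measurable_const
  have hmC : ∀ j, MeasurableSet (C j) := fun j => 𝒢.le j _ (hmeasC j)
  have hmD : ∀ i, MeasurableSet (D i) := fun i => 𝒢.le i _ (hmeasD i)
  -- the key induction
  have key : ∀ i, (∑ j ∈ Finset.range (i + 1), ∫ ω in C j, X j ω ∂μ) + ∫ ω in D i, X i ω ∂μ
      ≤ ∫ ω, X 0 ω ∂μ := by
    intro i
    induction i with
    | zero =>
      have hD0 : D 0 = (C 0)ᶜ := by
        ext ω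
        constructor
        · intro h hc; exact absurd hc.2 (not_le.2 (h 0 le_rfl))
        · intro h l hl
          obtain rfl : l = 0 := Nat.le_zero.mp hl
          by_contra hc
          exact h ⟨fun l' hl' => absurd hl' (Nat.not_lt_zero l'), not_lt.mp hc⟩
      rw [Finset.sum_range_one, hD0, integral_add_compl (hmC 0) (hX.integrable 0)]
    | succ i ih =>
      have hsplit : D i = C (i + 1) ∪ D (i + 1) := by
        ext ω
        simp only [hCdef, hDdef, Set.mem_setOf_eq, Set.mem_union, Nat.lt_succ_iff]
        constructor
        · intro h
          rcases le_or_gt (1 + δ) (X (i + 1) ω) with h2 | h2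
          · exact Or.inl ⟨h, h2⟩
          · refine Or.inr fun l hl => ?_
            rcases Nat.lt_succ_iff_lt_or_eq.mp (Nat.lt_succ_of_le hl) with h3 | h3
            · exact h l (Nat.lt_succ_iff.mp h3)
            · subst h3; exact h2
        · rintro (⟨h1, _⟩ | h1)
          · exact h1
          · exact fun l hl => h1 l (le_trans hl (Nat.le_succ i))
      have hdisj : Disjoint (C (i + 1)) (D (i + 1)) := by
        refine Set.disjoint_left.2 fun ω h1 h2 => absurd (h2 (i + 1) le_rfl) (not_lt.2 h1.2)
      have hunion : ∫ ω in D i, X (i + 1) ω ∂μ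
          = ∫ ω in C (i + 1), X (i + 1) ω ∂μ + ∫ ω in D (i + 1), X (i + 1) ω ∂μ := by
        rw [hsplit, setIntegral_union hdisj (hmD (i + 1))
          ((hX.integrable (i + 1)).integrableOn) ((hX.integrable (i + 1)).integrableOn)]
      have hstep : ∫ ω in D i, X (i + 1) ω ∂μ ≤ ∫ ω in D i, X i ω ∂μ :=
        hX.setIntegral_le (Nat.le_succ i) (hmeasD i)
      rw [Finset.sum_range_succ]
      linarith
  -- identify the event with the disjoint union of the C j
  have hB : {ω | ∃ i ≤ n, 1 + δ ≤ X i ω} = ⋃ j ∈ Finset.range (n + 1), C j := by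
    ext ω
    simp only [Set.mem_setOf_eq, Set.mem_iUnion, Finset.mem_range, Nat.lt_succ_iff, hCdef]
    constructor
    · rintro ⟨i, hin, hi⟩
      have hex : ∃ i, 1 + δ ≤ X i ω := ⟨i, hi⟩
      exact ⟨Nat.find hex, le_trans (Nat.find_min' hex hi) hin,
        fun l hl => lt_of_not_ge (Nat.find_min hex hl), Nat.find_spec hex⟩
    · rintro ⟨j, hj, _, h2⟩; exact ⟨j, hj, h2⟩
  have hdisjC : Pairwise (Function.onFun Disjoint C) := by
    have hdisjlt : ∀ i j, i < j → Disjoint (C i) (C j) := fun i j hij =>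
      Set.disjoint_left.2 fun ω hωi hωj => absurd (hωj.1 i hij) (not_lt.2 hωi.2)
    intro i j hij
    rcases hij.lt_or_gt with h | h
    · exact hdisjlt _ _ h
    · exact (hdisjlt _ _ h).symm
  set B := ⋃ j ∈ Finset.range (n + 1), C j with hBdef
  have hmB : MeasurableSet B := Finset.measurableSet_biUnion _ fun j _ => hmC j
  have hμB : μ B = ∑ j ∈ Finset.range (n + 1), μ (C j) :=
    measure_biUnion_finset (hdisjC.set_pairwise _) fun j _ => hmC j
  have hlow : (1 + δ) * (μ B).toReal ≤ ∑ j ∈ Finset.range (n + 1), ∫ ω in C j, X j ω ∂μ := by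
    rw [hμB, ENNReal.toReal_sum (fun j _ => measure_ne_top μ _), Finset.mul_sum]
    refine Finset.sum_le_sum fun j _ => ?_
    have := setIntegral_ge_of_const_le (hmC j) (measure_ne_top μ _) (fun ω hω => hω.2)
      ((hX.integrable j).integrableOn)
    rwa [smul_eq_mul, mul_comm, measureReal_def] at this
  have hDn : D n = Bᶜ := by
    rw [← hB]
    ext ω
    constructor
    · intro h hc
      obtain ⟨i, hi, hc2⟩ := hc
      exact absurd hc2 (not_le.2 (h i hi))
    · intro h l hl
      by_contra hc
      exact h ⟨l, hl, not_lt.mp hc⟩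
  have hsplitB : ∫ ω in B, X n ω ∂μ + ∫ ω in D n, X n ω ∂μ = ∫ ω, X n ω ∂μ := by
    rw [hDn]; exact integral_add_compl hmB (hX.integrable n)
  have hkeyn := key n
  -- now bound ∫ in B (X n - 1)
  have hposint : Integrable (fun ω => max (X n ω - 1) 0) μ :=
    ((hX.integrable n).sub (integrable_const (1:ℝ))).pos_part
  have hBbound : ∫ ω in B, X n ω ∂μ - (μ B).toReal ≤ ∫ ω, max (X n ω - 1) 0 ∂μ := by
    have e1 : ∫ ω in B, (X n ω - 1) ∂μ = ∫ ω in B, X n ω ∂μ - (μ B).toReal := by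
      rw [integral_sub ((hX.integrable n).integrableOn)
        (integrableOn_const (s := B) (μ := μ) (C := (1:ℝ)) (measure_ne_top μ _))]
      simp [setIntegral_const, measureReal_def]
    calc ∫ ω in B, X n ω ∂μ - (μ B).toReal = ∫ ω in B, (X n ω - 1) ∂μ := e1.symm
      _ ≤ ∫ ω in B, max (X n ω - 1) 0 ∂μ :=
        setIntegral_mono_on ((hX.integrable n).sub (integrable_const (1:ℝ))).integrableOn
          hposint.integrableOn hmB (fun ω _ => le_max_left _ _)
      _ ≤ ∫ ω, max (X n ω - 1) 0 ∂μ :=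
        setIntegral_le_integral hposint (ae_of_all _ fun ω => le_max_right _ _)
  have hcomb : ∫ ω, (1 - X n ω) ∂μ + ∫ ω, max (X n ω - 1) 0 ∂μ = ∫ ω, max (1 - X n ω) 0 ∂μ := by
    rw [← integral_add (show Integrable (fun ω => 1 - X n ω) μ from
      (integrable_const (1:ℝ)).sub (hX.integrable n))
      (show Integrable (fun ω => max (X n ω - 1) 0) μ from hposint)]
    exact integral_congr_ae (ae_of_all _ fun ω => max_identity (X n ω))
  have hone : ∫ ω, (1 - X n ω) ∂μ = 1 - ∫ ω, X n ω ∂μ := by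
    rw [integral_sub (integrable_const (1:ℝ)) (hX.integrable n)]
    simp
  rw [hB]
  nlinarith [ENNReal.toReal_nonneg (a := μ B)]


omit [IsProbabilityMeasure μ] in
lemma exists_mono_enum (v : ℕ → ℝ) (m N : ℕ) (hvN : ∀ i < m, v i ≤ (N : ℝ))
    (hv0 : ∀ i, 0 ≤ v i) :
    ∃ (t : ℕ → ℝ) (n : ℕ), Monotone t ∧ 0 ≤ t 0 ∧ t n = (N : ℝ) ∧
      ∀ i < m, ∃ j ≤ n, t j = v i := by
  classical
  set s := (Finset.range m).image v with hs
  set n := s.card with hn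
  have hmem : ∀ r ∈ s, 0 ≤ r ∧ r ≤ (N : ℝ) := by
    intro r hr
    obtain ⟨i, hi, rfl⟩ := Finset.mem_image.mp hr
    exact ⟨hv0 i, hvN i (Finset.mem_range.mp hi)⟩
  set t : ℕ → ℝ := fun j => if h : j < n then ((s.orderIsoOfFin rfl ⟨j, h⟩ : s) : ℝ) else N
    with ht
  have htval : ∀ j (h : j < n), t j = ((s.orderIsoOfFin rfl ⟨j, h⟩ : s) : ℝ) := by
    intro j h; simp [ht, h]
  have htN : ∀ j, ¬ j < n → t j = (N : ℝ) := by intro j h; simp [ht, h]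
  have hts : ∀ j (h : j < n), (t j ∈ s) := by
    intro j h; rw [htval j h]; exact (s.orderIsoOfFin rfl ⟨j, h⟩).2
  refine ⟨t, n, ?_, ?_, htN n (lt_irrefl n), ?_⟩
  · intro a b hab
    by_cases hb : b < n
    · have ha : a < n := lt_of_le_of_lt hab hb
      rw [htval a ha, htval b hb]
      have : (s.orderIsoOfFin rfl) ⟨a, ha⟩ ≤ (s.orderIsoOfFin rfl) ⟨b, hb⟩ :=
        (s.orderIsoOfFin rfl).monotone (by exact hab)
      exact_mod_cast this
    · rw [htN b hb]
      by_cases ha : a < n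
      · exact (hmem _ (hts a ha)).2
      · rw [htN a ha]
  · by_cases h0 : 0 < n
    · exact (hmem _ (hts 0 h0)).1
    · rw [htN 0 h0]; exact Nat.cast_nonneg N
  · intro i hi
    have hvi : v i ∈ s := Finset.mem_image.mpr ⟨i, Finset.mem_range.mpr hi, rfl⟩
    obtain ⟨j, hj⟩ := (s.orderIsoOfFin rfl).surjective ⟨v i, hvi⟩
    refine ⟨j, le_of_lt j.2, ?_⟩
    rw [htval j j.2]
    simp only [Fin.eta, hj]

variable {Ω : Type*} {m0 : MeasurableSpace Ω} {μ : Measure Ω} [IsProbabilityMeasure μ]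

lemma cont_bound (ℱ : Filtration ℝ m0) (M : ℝ → Ω → ℝ)
    (hM : Supermartingale M ℱ μ) (hMnn : ∀ t ω, 0 ≤ M t ω) (hM0 : ∀ ω, M 0 ω = 1)
    (W : Ω → ℝ) (hW : ∀ ω, ∃ N₀ : ℕ, ∀ N : ℕ, N₀ ≤ N → M (N : ℝ) ω = W ω)
    {δ : ℝ} (hδ : 0 < δ) :
    μ {ω | ∃ q : ℚ, M (max (q : ℝ) 0) ω ≤ 1 - δ ∨ 1 + δ ≤ M (max (q : ℝ) 0) ω}
      ≤ ENNReal.ofReal (2 / δ * ∫ ω, max (1 - W ω) 0 ∂μ) := by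
  classical
  set e : ℕ → ℚ := fun n => (Denumerable.eqv ℚ).symm n with he
  have hesurj : Function.Surjective e := (Denumerable.eqv ℚ).symm.surjective
  set v : ℕ → ℝ := fun i => max ((e i : ℝ)) 0 with hv
  have hv0 : ∀ i, 0 ≤ v i := fun i => le_max_right _ _
  set S : ℕ → Set Ω := fun m =>
    {ω | ∃ i < m, M (v i) ω ≤ 1 - δ ∨ 1 + δ ≤ M (v i) ω} with hS
  have hmono : Monotone S := by
    intro a b hab ω hω
    obtain ⟨i, hi, h⟩ := hω
    exact ⟨i, lt_of_lt_of_le hi hab, h⟩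
  have hsub : {ω | ∃ q : ℚ, M (max (q : ℝ) 0) ω ≤ 1 - δ ∨ 1 + δ ≤ M (max (q : ℝ) 0) ω}
      ⊆ ⋃ m, S m := by
    intro ω hω
    obtain ⟨q, hq⟩ := hω
    obtain ⟨i, rfl⟩ := hesurj q
    exact Set.mem_iUnion.mpr ⟨i + 1, ⟨i, Nat.lt_succ_self i, hq⟩⟩
  have hlim : Tendsto (fun N : ℕ => ∫ ω, max (1 - M (N : ℝ) ω) 0 ∂μ) atTop
      (𝓝 (∫ ω, max (1 - W ω) 0 ∂μ)) := by
    apply tendsto_integral_of_dominated_convergence (bound := fun _ => (1 : ℝ))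
    · intro N
      exact ((continuous_const.sub continuous_id).max continuous_const).comp_aestronglyMeasurable
        ((hM.integrable _).aestronglyMeasurable)
    · exact integrable_const 1
    · intro N
      refine ae_of_all _ fun ω => ?_
      rw [Real.norm_eq_abs, abs_of_nonneg (le_max_right _ _)]
      exact max_le (by linarith [hMnn (N : ℝ) ω]) zero_le_one
    · refine ae_of_all _ fun ω => ?_
      obtain ⟨N₀, hN₀⟩ := hW ω
      refine tendsto_const_nhds.congr' ?_
      filter_upwards [eventually_ge_atTop N₀] with N hN
      rw [hN₀ N hN]
  have hbound : ∀ m, δ * (μ (S m)).toReal ≤ 2 * ∫ ω, max (1 - W ω) 0 ∂μ := by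
    intro m
    refine ge_of_tendsto (hlim.const_mul 2) ?_
    have hN₁ : ∃ N₁ : ℕ, ∀ i < m, v i ≤ (N₁ : ℝ) := by
      refine ⟨(Finset.range m).sup fun i => ⌈v i⌉₊, fun i hi => ?_⟩
      calc v i ≤ (⌈v i⌉₊ : ℝ) := Nat.le_ceil _
        _ ≤ _ := by
          exact_mod_cast Nat.cast_le.mpr (Finset.le_sup (f := fun i => ⌈v i⌉₊)
            (Finset.mem_range.mpr hi))
    obtain ⟨N₁, hN₁⟩ := hN₁
    filter_upwards [eventually_ge_atTop N₁] with N hN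
    have hvN : ∀ i < m, v i ≤ (N : ℝ) :=
      fun i hi => le_trans (hN₁ i hi) (Nat.cast_le.mpr hN)
    obtain ⟨t, n, hmonot, ht0, htn, hcov⟩ := exists_mono_enum v m N hvN hv0
    let 𝒢 : Filtration ℕ m0 :=
      ⟨fun i => ℱ (t i), fun i j hij => ℱ.mono (hmonot hij), fun i => ℱ.le _⟩
    let X : ℕ → Ω → ℝ := fun i => M (t i)
    have hXs : Supermartingale X 𝒢 μ :=
      ⟨fun i => hM.stronglyAdapted (t i), fun i j hij => hM.2.1 _ _ (hmonot hij),
        fun i => hM.integrable _⟩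
    have hX0int : ∫ ω, X 0 ω ∂μ ≤ 1 := by
      have h1 := hM.setIntegral_le ht0 (MeasurableSet.univ)
      rw [setIntegral_univ, setIntegral_univ] at h1
      have h2 : ∫ ω, M 0 ω ∂μ = 1 := by simp [hM0]
      calc ∫ ω, X 0 ω ∂μ ≤ ∫ ω, M 0 ω ∂μ := h1
        _ = 1 := h2
    set A := {ω | ∃ i ≤ n, X i ω ≤ 1 - δ} with hA
    set B := {ω | ∃ i ≤ n, 1 + δ ≤ X i ω} with hB
    have hincl : S m ⊆ A ∪ B := by
      intro ω hω
      obtain ⟨i, him, hor⟩ := hω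
      obtain ⟨j, hjn, hjt⟩ := hcov i him
      rcases hor with h | h
      · exact Or.inl ⟨j, hjn, by rw [show X j ω = M (v i) ω by rw [hA] at *; simp only [X]; rw [hjt]]; exact h⟩
      · exact Or.inr ⟨j, hjn, by rw [show X j ω = M (v i) ω by simp only [X]; rw [hjt]]; exact h⟩
    have hdown := down_lemma 𝒢 X hXs hδ n
    have hup := up_lemma 𝒢 X hXs hX0int hδ n
    have hXnN : X n = M (N : ℝ) := by simp only [X]; rw [htn]
    rw [hXnN] at hdown hup
    have hμ1 : (μ (S m)).toReal ≤ (μ A).toReal + (μ B).toReal := by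
      calc (μ (S m)).toReal ≤ (μ (A ∪ B)).toReal :=
          ENNReal.toReal_mono (measure_ne_top μ _) (measure_mono hincl)
        _ ≤ ((μ A) + (μ B)).toReal :=
          ENNReal.toReal_mono (by finiteness) (measure_union_le A B)
        _ = (μ A).toReal + (μ B).toReal :=
          ENNReal.toReal_add (measure_ne_top μ _) (measure_ne_top μ _)
    have hδμ : δ * (μ (S m)).toReal ≤ δ * ((μ A).toReal + (μ B).toReal) :=
      mul_le_mul_of_nonneg_left hμ1 hδ.le
    calc δ * (μ (S m)).toReal ≤ δ * (μ A).toReal + δ * (μ B).toReal := by linarith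
      _ ≤ 2 * ∫ ω, max (1 - M (N : ℝ) ω) 0 ∂μ := by linarith
  refine le_trans (measure_mono hsub) ?_
  refine le_of_tendsto (tendsto_measure_iUnion_atTop hmono) (Eventually.of_forall fun m => ?_)
  show μ (S m) ≤ ENNReal.ofReal (2 / δ * ∫ ω, max (1 - W ω) 0 ∂μ)
  rw [← ENNReal.ofReal_toReal (measure_ne_top μ (S m))]
  apply ENNReal.ofReal_le_ofReal
  rw [div_mul_eq_mul_div, le_div_iff₀ hδ]
  have := hbound m
  linarith


end Statement0Auxiliary

open Statement0Auxiliary in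
/-- A sequence of nonnegative càdlàg supermartingales on `[0,T]` starting at `1`
whose terminal values tend to `1` in probability converges to `1` uniformly on `[0,T]`
in probability. -/
theorem statement0
    {Ω : Type*} {m0 : MeasurableSpace Ω} {μ : Measure Ω} [IsProbabilityMeasure μ]
    (ℱ : Filtration ℝ m0) (T : Ω → ℝ) (hT : IsStoppingTime ℱ (fun ω => (T ω : WithTop ℝ))) (hT0 : ∀ ω, 0 ≤ T ω)
    (Z : ℕ → ℝ → Ω → ℝ)
    (hrc : ∀ k, RightCont (Z k))
    (hll : ∀ k, ∃ Zm, HasLeftLimits (Z k) Zm)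
    (hnn : ∀ k t ω, 0 ≤ Z k t ω)
    (h0 : ∀ k ω, Z k 0 ω = 1)
    (hsuper : ∀ k, Supermartingale (fun t ω => Z k (min t (T ω)) ω) ℱ μ)
    (hZT : TendstoInMeasure μ (fun k ω => Z k (T ω) ω) atTop (fun _ => (1 : ℝ))) :
    TendstoInMeasure μ (fun k ω => ⨆ t ∈ Icc (0 : ℝ) (T ω), |Z k t ω - 1|) atTop
      (fun _ => (0 : ℝ)) := by

  classical
  set M : ℕ → ℝ → Ω → ℝ := fun k t ω => Z k (min t (T ω)) ω with hM
  set W : ℕ → Ω → ℝ := fun k ω => Z k (T ω) ω with hW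
  set g : ℕ → ℝ := fun k => ∫ ω, max (1 - W k ω) 0 ∂μ with hg
  -- eventual constancy of M k ↑N
  have hWev : ∀ k ω, ∃ N₀ : ℕ, ∀ N : ℕ, N₀ ≤ N → M k (N : ℝ) ω = W k ω := by
    intro k ω
    refine ⟨⌈T ω⌉₊, fun N hN => ?_⟩
    have : T ω ≤ (N : ℝ) := le_trans (Nat.le_ceil _) (Nat.cast_le.mpr hN)
    simp only [hM, hW, min_eq_right this]
  -- measurability of W k
  have hWmeas : ∀ k, AEStronglyMeasurable (W k) μ := by
    intro k
    refine aestronglyMeasurable_of_tendsto_ae atTop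
      (fun N : ℕ => ((hsuper k).integrable (N : ℝ)).aestronglyMeasurable)
      (ae_of_all _ fun ω => ?_)
    obtain ⟨N₀, hN₀⟩ := hWev k ω
    refine tendsto_const_nhds.congr' ?_
    filter_upwards [eventually_ge_atTop N₀] with N hN
    exact (hN₀ N hN).symm
  -- convergence in measure of the positive parts
  have hFmeas : ∀ k, AEStronglyMeasurable (fun ω => max (1 - W k ω) 0) μ := fun k =>
    ((continuous_const.sub continuous_id).max continuous_const).comp_aestronglyMeasurable
      (hWmeas k)
  have hinmeas : TendstoInMeasure μ (fun k ω => max (1 - W k ω) 0) atTop (fun _ => (0 : ℝ)) := by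
    rw [tendstoInMeasure_iff_dist]
    intro ε' hε'
    refine tendsto_of_tendsto_of_tendsto_of_le_of_le tendsto_const_nhds (tendstoInMeasure_iff_dist.mp hZT ε' hε')
      (fun k => zero_le) (fun k => measure_mono ?_)
    intro ω hω
    simp only [Set.mem_setOf_eq] at hω ⊢
    calc ε' ≤ dist (max (1 - W k ω) 0) 0 := hω
      _ ≤ dist (W k ω) 1 := by
        rw [Real.dist_eq, Real.dist_eq, sub_zero, abs_of_nonneg (le_max_right _ _)]
        rcases le_total (W k ω) 1 with h | h
        · rw [max_eq_left (by linarith), abs_of_nonpos (by linarith)]; linarith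
        · rw [max_eq_right (by linarith)]; exact abs_nonneg _
  -- g tends to 0
  have hg0 : Tendsto g atTop (𝓝 0) := by
    refine tendsto_of_subseq_tendsto fun ns hns => ?_
    have hsubm : TendstoInMeasure μ (fun n ω => max (1 - W (ns n) ω) 0) atTop
        (fun _ => (0 : ℝ)) := fun ε' hε' => (hinmeas ε' hε').comp hns
    obtain ⟨ms, hms, hae⟩ := hsubm.exists_seq_tendsto_ae
    refine ⟨ms, ?_⟩
    have : Tendsto (fun n => ∫ ω, max (1 - W (ns (ms n)) ω) 0 ∂μ) atTop
        (𝓝 (∫ (_ : Ω), (0 : ℝ) ∂μ)) := by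
      apply tendsto_integral_of_dominated_convergence (bound := fun _ => (1 : ℝ))
      · intro n; exact hFmeas _
      · exact integrable_const 1
      · intro n
        refine ae_of_all _ fun ω => ?_
        rw [Real.norm_eq_abs, abs_of_nonneg (le_max_right _ _)]
        exact max_le (by linarith [hnn (ns (ms n)) (T ω) ω]) zero_le_one
      · exact hae
    simpa using this
  -- main quantitative bound
  rw [tendstoInMeasure_iff_dist]
  intro ε hε
  set δ : ℝ := ε / 2 with hδdef
  have hδ : 0 < δ := by positivity
  have hbound : ∀ k, μ {ω | ε ≤ dist (⨆ t ∈ Icc (0 : ℝ) (T ω), |Z k t ω - 1|) 0}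
      ≤ ENNReal.ofReal (2 / δ * g k) := by
    intro k
    have hstep1 : {ω | ε ≤ dist (⨆ t ∈ Icc (0 : ℝ) (T ω), |Z k t ω - 1|) 0} ⊆
        {ω | ∃ q : ℚ, M k (max (q : ℝ) 0) ω ≤ 1 - δ ∨ 1 + δ ≤ M k (max (q : ℝ) 0) ω} := by
      intro ω hω
      simp only [Set.mem_setOf_eq] at hω ⊢
      have h1 : ∃ t, t ∈ Icc (0 : ℝ) (T ω) ∧ δ < |Z k t ω - 1| := by
        by_contra hcon
        push_neg at hcon
        have hS_nonneg : (0 : ℝ) ≤ ⨆ t ∈ Icc (0 : ℝ) (T ω), |Z k t ω - 1| :=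
          Real.iSup_nonneg fun t => Real.iSup_nonneg fun _ => abs_nonneg _
        have hS_le : (⨆ t ∈ Icc (0 : ℝ) (T ω), |Z k t ω - 1|) ≤ δ :=
          Real.iSup_le (fun t => Real.iSup_le (fun ht => hcon t ht) hδ.le) hδ.le
        rw [Real.dist_eq, sub_zero, abs_of_nonneg hS_nonneg] at hω
        have : ε ≤ δ := le_trans hω hS_le
        rw [hδdef] at this
        linarith
      obtain ⟨t, ⟨ht0, htT⟩, habs⟩ := h1
      have hMt : M k t ω = Z k t ω := by simp only [hM, min_eq_left htT]
      have hrc' : ContinuousWithinAt (fun s => M k s ω) (Ici t) t := by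
        have hmin : ContinuousWithinAt (fun s : ℝ => min s (T ω)) (Ici t) t :=
          (continuous_id.min continuous_const).continuousWithinAt
        have hmaps : Set.MapsTo (fun s : ℝ => min s (T ω)) (Ici t) (Ici (min t (T ω))) :=
          fun s hs => Set.mem_Ici.mpr (min_le_min hs le_rfl)
        exact ContinuousWithinAt.comp (g := fun u => Z k u ω)
          (f := fun s : ℝ => min s (T ω)) (s := Ici t) (t := Ici (min t (T ω))) (x := t)
          (hrc k ω (min t (T ω))) hmin hmaps
      have hopen : IsOpen {x : ℝ | δ < |x - 1|} :=
        isOpen_lt continuous_const ((continuous_id.sub continuous_const).abs)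
      have hmem : M k t ω ∈ {x : ℝ | δ < |x - 1|} := by rw [hMt]; exact habs
      have hV : ∀ᶠ s in 𝓝[Ici t] t, δ < |M k s ω - 1| :=
        hrc'.eventually (hopen.eventually_mem hmem)
      obtain ⟨u, hu, hsubIco⟩ := mem_nhdsGE_iff_exists_Ico_subset.mp hV
      obtain ⟨q, hq1, hq2⟩ := exists_rat_btwn (show t < u from hu)
      have hq0 : (0 : ℝ) ≤ (q : ℝ) := le_of_lt (lt_of_le_of_lt ht0 hq1)
      have hqval : δ < |M k (q : ℝ) ω - 1| := hsubIco ⟨le_of_lt hq1, hq2⟩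
      refine ⟨q, ?_⟩
      rw [max_eq_left hq0]
      rcases lt_abs.mp hqval with h | h
      · right; linarith
      · left; linarith
    refine le_trans (measure_mono hstep1) ?_
    exact cont_bound ℱ (M k) (hsuper k) (fun t ω => hnn k _ ω)
      (fun ω => by simp only [hM, min_eq_left (hT0 ω)]; exact h0 k ω) (W k) (hWev k) hδ
  refine tendsto_of_tendsto_of_tendsto_of_le_of_le tendsto_const_nhds ?_
    (fun k => zero_le) hbound
  have : Tendsto (fun k => 2 / δ * g k) atTop (𝓝 (2 / δ * 0)) := hg0.const_mul _
  rw [mul_zero] at this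
  have h2 := (ENNReal.tendsto_ofReal this : Tendsto (fun k => ENNReal.ofReal (2 / δ * g k))
    atTop (𝓝 (ENNReal.ofReal 0)))
  simpa using h2
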